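/- Let G be a connected graph on n vertices (vertex set V) with integer Laplacian L in which every vertex has degree k₁ or k₂, such that: any two distinct non-adjacent vertices have exactly μ common neighbors; any two adjacent vertices both of degree k₁ have exactly μ − 1 + k₁ − k₂ common neighbors; any two adjacent vertices of different degrees have exactly μ − 1 common neighbors; any two adjacent vertices both of degree k₂ have exactly μ − 1 + k₂ − k₁ common neighbors; and k₁·k₂ + μ = n·μ. Let u, v be adjacent vertices with deg u = k₁ and deg v = k₂, and define c : V → ℤ by c u = k₂, c v = −k₁, and for w ∉ {u,v}, c w = (1 if w is adjacent to u else 0) − (1 if w is adjacent to v else 0). Then ∑_w c w · (row w of L) = (n·μ) • (e_u − e_v), where e_w denotes the standard basis vector supported at w. -/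

import Mathlib

open Finset

private lemma sum_adj_mul_adj {V : Type*} [Fintype V] [DecidableEq V]
    (G : SimpleGraph V) [DecidableRel G.Adj] (a b : V) :
    ∑ w : V, (if G.Adj w a then (1:ℤ) else 0) * (if G.Adj w b then 1 else 0)
      = Fintype.card (G.commonNeighbors a b) := by
  have h1 : ∀ w, (if G.Adj w a then (1:ℤ) else 0) * (if G.Adj w b then 1 else 0)
      = if w ∈ G.commonNeighbors a b then 1 else 0 := by
    intro w
    by_cases h1 : G.Adj w a <;> by_cases h2 : G.Adj w b <;>
      simp [SimpleGraph.mem_commonNeighbors, G.adj_comm a w, G.adj_comm b w, h1, h2]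
  simp only [h1]
  rw [Finset.sum_boole]
  norm_cast
  rw [Fintype.card_subtype]

theorem stmt6 {V : Type*} [Fintype V] [DecidableEq V] (G : SimpleGraph V)
    [DecidableRel G.Adj] (hconn : G.Connected) (n k₁ k₂ μ : ℕ)
    (hcard : Fintype.card V = n)
    (hdeg : ∀ w : V, G.degree w = k₁ ∨ G.degree w = k₂)
    (hnonadj : ∀ x y : V, x ≠ y → ¬G.Adj x y →
      Fintype.card (G.commonNeighbors x y) = μ)
    (hadj11 : ∀ x y : V, G.Adj x y → G.degree x = k₁ → G.degree y = k₁ →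
      (Fintype.card (G.commonNeighbors x y) : ℤ) = (μ : ℤ) - 1 + k₁ - k₂)
    (hadj12 : ∀ x y : V, G.Adj x y → G.degree x ≠ G.degree y →
      (Fintype.card (G.commonNeighbors x y) : ℤ) = (μ : ℤ) - 1)
    (hadj22 : ∀ x y : V, G.Adj x y → G.degree x = k₂ → G.degree y = k₂ →
      (Fintype.card (G.commonNeighbors x y) : ℤ) = (μ : ℤ) - 1 + k₂ - k₁)
    (hparam : k₁ * k₂ + μ = n * μ)
    (u v : V) (huv : G.Adj u v) (hu : G.degree u = k₁) (hv : G.degree v = k₂)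
    (c : V → ℤ) (hcu : c u = (k₂ : ℤ)) (hcv : c v = -(k₁ : ℤ))
    (hcw : ∀ w, w ≠ u → w ≠ v →
      c w = (if G.Adj w u then 1 else 0) - (if G.Adj w v then 1 else 0)) :
    ∑ w, c w • (G.lapMatrix ℤ w) =
      ((n * μ : ℕ) : ℤ) • (Pi.single u 1 - Pi.single v 1) := by
  classical
  have huvne : u ≠ v := G.ne_of_adj huv
  -- common-neighbor count for adjacent pairs
  have hCN : ∀ a b : V, G.Adj a b → (Fintype.card (G.commonNeighbors a b) : ℤ)
      = (μ : ℤ) - 1 + G.degree a + G.degree b - k₁ - k₂ := by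
    intro a b hab
    by_cases hk : k₁ = k₂
    · have ha : G.degree a = k₁ := by rcases hdeg a with h | h <;> omega
      have hb : G.degree b = k₁ := by rcases hdeg b with h | h <;> omega
      rw [hadj11 a b hab ha hb, ha, hb]; push_cast; ring
    · rcases hdeg a with ha | ha <;> rcases hdeg b with hb | hb
      · rw [hadj11 a b hab ha hb, ha, hb]; push_cast; ring
      · rw [hadj12 a b hab (by rw [ha, hb]; exact hk), ha, hb]; push_cast; ring
      · rw [hadj12 a b hab (by rw [ha, hb]; exact Ne.symm hk), ha, hb]; push_cast; ring
      · rw [hadj22 a b hab ha hb, ha, hb]; push_cast; ring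
  have hCNself : ∀ a : V, (Fintype.card (G.commonNeighbors a a) : ℤ) = G.degree a := by
    intro a
    have hset : G.commonNeighbors a a = G.neighborSet a := by
      simp [SimpleGraph.commonNeighbors]
    rw [Fintype.card_congr (Equiv.setCongr hset), G.card_neighborSet_eq_degree]
  have hCNn : ∀ a b : V, a ≠ b → ¬G.Adj a b →
      (Fintype.card (G.commonNeighbors a b) : ℤ) = μ := by
    intro a b h1 h2; exact_mod_cast hnonadj a b h1 h2
  have hLdef : ∀ w y : V, G.lapMatrix ℤ w y =
      (if w = y then (G.degree w : ℤ) else 0) - (if G.Adj w y then 1 else 0) := by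
    intro w y
    simp [SimpleGraph.lapMatrix, SimpleGraph.degMatrix, Matrix.sub_apply,
      Matrix.diagonal_apply, SimpleGraph.adjMatrix_apply]
  funext x
  simp only [Finset.sum_apply, Pi.smul_apply, smul_eq_mul, Pi.sub_apply]
  -- decomposition of c
  have hc : ∀ w : V, c w = ((if G.Adj w u then (1:ℤ) else 0) - (if G.Adj w v then 1 else 0))
      + (if w = u then (k₂:ℤ)+1 else 0) - (if w = v then (k₁:ℤ)+1 else 0) := by
    intro w
    by_cases hwu : w = u
    · subst hwu; simp [hcu, huv, huvne, G.irrefl]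
    · by_cases hwv : w = v
      · subst hwv; simp [hcv, huv.symm, hwu, G.irrefl]
      · rw [hcw w hwu hwv]; simp [hwu, hwv]
  -- sum over w of [Adj w a] * L w x
  have S1 : ∀ a : V, ∑ w : V, (if G.Adj w a then (1:ℤ) else 0) * G.lapMatrix ℤ w x
      = (if G.Adj x a then (1:ℤ) else 0) * G.degree x
        - Fintype.card (G.commonNeighbors a x) := by
    intro a
    simp only [hLdef, mul_sub]
    rw [Finset.sum_sub_distrib]
    congr 1
    · rw [Finset.sum_congr rfl (fun w _ => by rw [mul_ite, mul_zero]),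
        Finset.sum_ite_eq' Finset.univ x (fun w => (if G.Adj w a then (1:ℤ) else 0) * G.degree w)]
      simp [mul_comm]
    · exact sum_adj_mul_adj G a x
  have hsplit : ∑ w : V, c w * G.lapMatrix ℤ w x
      = ((if G.Adj x u then (1:ℤ) else 0) * G.degree x - Fintype.card (G.commonNeighbors u x))
      - ((if G.Adj x v then (1:ℤ) else 0) * G.degree x - Fintype.card (G.commonNeighbors v x))
      + ((k₂:ℤ)+1) * G.lapMatrix ℤ u x - ((k₁:ℤ)+1) * G.lapMatrix ℤ v x := by
    rw [← S1 u, ← S1 v]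
    have : ∀ w : V, c w * G.lapMatrix ℤ w x
        = ((if G.Adj w u then (1:ℤ) else 0) * G.lapMatrix ℤ w x
            - (if G.Adj w v then 1 else 0) * G.lapMatrix ℤ w x)
          + (if w = u then ((k₂:ℤ)+1) * G.lapMatrix ℤ w x else 0)
          - (if w = v then ((k₁:ℤ)+1) * G.lapMatrix ℤ w x else 0) := by
      intro w
      rw [hc w]
      split_ifs <;> ring
    rw [Finset.sum_congr rfl (fun w _ => this w)]
    rw [Finset.sum_sub_distrib, Finset.sum_add_distrib, Finset.sum_sub_distrib,
      Finset.sum_ite_eq' Finset.univ u, Finset.sum_ite_eq' Finset.univ v]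
    simp
  rw [hsplit]
  have hparamZ : (k₁ : ℤ) * k₂ + μ = (n : ℤ) * μ := by exact_mod_cast hparam
  by_cases hxu : x = u
  · subst hxu
    have h1 : ¬ G.Adj x x := G.irrefl
    have h2 : G.Adj x v := huv
    rw [hLdef, hLdef, hCNself x, hCN v x huv.symm, if_neg h1, if_pos h2,
      if_pos rfl, if_neg (Ne.symm huvne), if_pos huv.symm]
    rw [Pi.single_eq_same, Pi.single_eq_of_ne huvne]
    rw [hu, hv]
    push_cast
    ring_nf
    nlinarith [hparamZ]
  · by_cases hxv : x = v
    · subst hxv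
      have h1 : ¬ G.Adj x x := G.irrefl
      rw [hLdef, hLdef, hCNself x, hCN u x huv, if_pos huv.symm, if_neg h1,
        if_neg huvne, if_pos huv, if_pos rfl]
      rw [Pi.single_eq_of_ne (Ne.symm huvne), Pi.single_eq_same]
      rw [hu, hv]
      push_cast
      linear_combination -hparamZ
    · rw [Pi.single_eq_of_ne hxu, Pi.single_eq_of_ne hxv]
      rw [hLdef, hLdef, if_neg (fun h : u = x => hxu h.symm), if_neg (fun h : v = x => hxv h.symm)]
      by_cases hax : G.Adj u x <;> by_cases hbx : G.Adj v x
      · rw [hCN u x hax, hCN v x hbx, if_pos hax.symm, if_pos hbx.symm,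
          if_pos hax, if_pos hbx, hu, hv]
        push_cast; ring
      · rw [hCN u x hax, hCNn v x (fun h : v = x => hxv h.symm) hbx, if_pos hax.symm,
          if_neg (fun h => hbx (G.adj_symm h)), if_pos hax, if_neg hbx, hu]
        push_cast; ring
      · rw [hCNn u x (fun h : u = x => hxu h.symm) hax, hCN v x hbx, if_neg (fun h => hax (G.adj_symm h)),
          if_pos hbx.symm, if_neg hax, if_pos hbx, hv]
        push_cast; ring
      · rw [hCNn u x (fun h : u = x => hxu h.symm) hax, hCNn v x (fun h : v = x => hxv h.symm) hbx,
          if_neg (fun h => hax (G.adj_symm h)), if_neg (fun h => hbx (G.adj_symm h)),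
          if_neg hax, if_neg hbx]
        push_cast; ring
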